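/- Suppose the polynomial Σ_{ℓ=-r}^p a_ℓ z^{ℓ+r} has exactly r roots (with multiplicity) in the punctured open unit disk. Then for every u ∈ ℝ there exists a unique sequence (v_j)_{j∈ℕ} with v_0 = … = v_{r-1} = −u, satisfying Σ_{ℓ=-r}^p a_ℓ v_{j+ℓ+r} = 0 for all j ≥ 0 and v_j → 0 at infinity; moreover v_j = u·w_j where (w_j) is the unique such sequence for u = 1, and v decays exponentially fast. -/

import Mathlib

open Polynomial Finset

noncomputable section
namespace Stmt9

/-- The linear difference operator associated to a polynomial. -/
def L (A : Polynomial ℂ) (v : ℕ → ℂ) (j : ℕ) : ℂ := A.sum fun i c => c * v (j + i)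

lemma L_eq_range {A : Polynomial ℂ} {N : ℕ} (h : A.natDegree < N) (v : ℕ → ℂ) (j : ℕ) :
    L A v j = ∑ i ∈ range N, A.coeff i * v (j + i) := by
  rw [L, Polynomial.sum_over_range' _ (by simp) _ h]

lemma L_zero (v : ℕ → ℂ) (j : ℕ) : L 0 v j = 0 := by simp [L]

lemma L_one (v : ℕ → ℂ) (j : ℕ) : L 1 v j = v j := by
  rw [L_eq_range (N := 1) (by simp)]; simp

lemma L_add (A B : Polynomial ℂ) (v : ℕ → ℂ) (j : ℕ) :
    L (A + B) v j = L A v j + L B v j := by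
  set N := max A.natDegree B.natDegree + 1 with hN
  rw [L_eq_range (N := N) (by have := natDegree_add_le A B; omega) v j,
    L_eq_range (N := N) (by omega) v j, L_eq_range (N := N) (by omega) v j,
    ← Finset.sum_add_distrib]
  exact Finset.sum_congr rfl fun i _ => by rw [coeff_add, add_mul]

lemma L_C_mul (c : ℂ) (A : Polynomial ℂ) (v : ℕ → ℂ) (j : ℕ) :
    L (C c * A) v j = c * L A v j := by
  rw [L_eq_range (N := A.natDegree + 1)
      (lt_of_le_of_lt (natDegree_C_mul_le c A) (lt_add_one _)) v j,
    L_eq_range (N := A.natDegree + 1) (lt_add_one _) v j, Finset.mul_sum]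
  exact Finset.sum_congr rfl fun i _ => by rw [coeff_C_mul, mul_assoc]

lemma L_X_mul (A : Polynomial ℂ) (v : ℕ → ℂ) (j : ℕ) :
    L (X * A) v j = L A v (j + 1) := by
  rw [L_eq_range (N := A.natDegree + 2)
      (by have := natDegree_mul_le (p := (X : Polynomial ℂ)) (q := A); simp at this; omega) v j,
    L_eq_range (N := A.natDegree + 1) (lt_add_one _) v (j + 1),
    Finset.sum_range_succ']
  simp only [coeff_X_mul]
  have h0 : (X * A).coeff 0 = 0 := by
    rw [mul_coeff_zero, coeff_X_zero, zero_mul]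
  rw [h0, zero_mul, add_zero]
  exact Finset.sum_congr rfl fun i _ => by ring_nf

lemma L_Xpow_mul (n : ℕ) (A : Polynomial ℂ) (v : ℕ → ℂ) (j : ℕ) :
    L (X ^ n * A) v j = L A v (j + n) := by
  induction n generalizing j with
  | zero => simp
  | succ n ih =>
      have : X ^ (n + 1) * A = X * (X ^ n * A) := by ring
      rw [this, L_X_mul, ih, add_assoc, add_comm 1 n]

lemma L_mul (A B : Polynomial ℂ) (v : ℕ → ℂ) (j : ℕ) :
    L (A * B) v j = L A (fun k => L B v k) j := by
  induction A using Polynomial.induction_on' generalizing j with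
  | add A1 A2 h1 h2 =>
      rw [add_mul, L_add, L_add, h1, h2]
  | monomial n c =>
      have hXn : X ^ n = X ^ n * (1 : Polynomial ℂ) := by ring
      rw [← C_mul_X_pow_eq_monomial, mul_assoc, L_C_mul, L_Xpow_mul, L_C_mul, hXn, L_Xpow_mul,
        L_one]

lemma L_X_sub_C (z : ℂ) (v : ℕ → ℂ) (j : ℕ) :
    L (X - C z) v j = v (j + 1) - z * v j := by
  rw [L_eq_range (N := 2) (by simpa using natDegree_X_sub_C_le z)]
  simp [Finset.sum_range_succ]
  ring

/-- peeling one factor from a product over a multiset of roots -/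
lemma L_prod_cons (z : ℂ) (M : Multiset ℂ) (v : ℕ → ℂ) (j : ℕ) :
    L (((z ::ₘ M).map fun w => X - C w).prod) v j
      = L ((M.map fun w => X - C w).prod) (fun k => v (k + 1) - z * v k) j := by
  rw [Multiset.map_cons, Multiset.prod_cons, mul_comm, L_mul]
  exact congrArg (fun f => L _ f j) (funext fun k => L_X_sub_C z v k)

/-- Claim A : a decaying solution of a recurrence whose roots all have modulus ≥ 1 vanishes. -/
lemma vanish (M : Multiset ℂ) (hM : ∀ z ∈ M, 1 ≤ ‖z‖) (y : ℕ → ℂ)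
    (hy : ∀ j, L ((M.map fun w => X - C w).prod) y j = 0)
    (hlim : Filter.Tendsto y Filter.atTop (nhds 0)) : ∀ j, y j = 0 := by
  induction M using Multiset.induction_on generalizing y with
  | empty => intro j; simpa [L_one] using hy j
  | cons z M ih =>
      have hz : 1 ≤ ‖z‖ := hM z (Multiset.mem_cons_self z M)
      set y' : ℕ → ℂ := fun k => y (k + 1) - z * y k with hy'
      have hy'rec : ∀ j, L ((M.map fun w => X - C w).prod) y' j = 0 := by
        intro j; rw [← L_prod_cons]; exact hy j
      have hy'lim : Filter.Tendsto y' Filter.atTop (nhds 0) := by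
        have h1 : Filter.Tendsto (fun k => y (k + 1)) Filter.atTop (nhds 0) :=
          hlim.comp (Filter.tendsto_add_atTop_nat 1)
        have h2 : Filter.Tendsto (fun k => z * y k) Filter.atTop (nhds 0) := by
          simpa using hlim.const_mul z
        simpa using h1.sub h2
      have hy'0 : ∀ j, y' j = 0 := ih (fun w hw => hM w (Multiset.mem_cons_of_mem hw)) y' hy'rec hy'lim
      have hstep : ∀ k, y (k + 1) = z * y k := by
        intro k; have := hy'0 k; simp [hy'] at this; linear_combination this
      have hpow : ∀ k m, y (k + m) = z ^ m * y k := by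
        intro k m
        induction m with
        | zero => simp
        | succ m ihm => rw [← add_assoc, hstep, ihm]; ring
      intro k
      have habs : ∀ m, ‖y k‖ ≤ ‖y (k + m)‖ := by
        intro m
        rw [hpow k m, norm_mul, norm_pow]
        nlinarith [one_le_pow₀ hz (n := m), norm_nonneg (y k),
          pow_nonneg (norm_nonneg z) m]
      have hlim2 : Filter.Tendsto (fun m => ‖y (k + m)‖) Filter.atTop (nhds 0) := by
        have : Filter.Tendsto (fun m => y (k + m)) Filter.atTop (nhds 0) := by
          have := hlim.comp (Filter.tendsto_add_atTop_nat k)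
          simpa [Function.comp_def, add_comm] using this
        simpa using this.norm
      have hle : ‖y k‖ ≤ 0 :=
        ge_of_tendsto hlim2 (Filter.Eventually.of_forall habs)
      have : ‖y k‖ = 0 := le_antisymm hle (norm_nonneg _)
      exact norm_eq_zero.mp this

/-- polynomial-geometric decay for solutions of a recurrence with roots of modulus ≤ ρ -/
lemma decay (M : Multiset ℂ) (ρ : ℝ) (hρ : 0 < ρ) (hM : ∀ z ∈ M, ‖z‖ ≤ ρ)
    (v : ℕ → ℂ) (hv : ∀ j, L ((M.map fun w => X - C w).prod) v j = 0) :
    ∃ C > 0, ∀ j, ‖v j‖ ≤ C * ((j : ℝ) + 1) ^ (Multiset.card M) * ρ ^ j := by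
  induction M using Multiset.induction_on generalizing v with
  | empty =>
      refine ⟨1, one_pos, fun j => ?_⟩
      have : v j = 0 := by simpa [L_one] using hv j
      rw [this]
      simp
      positivity
  | cons z M ih =>
      have hz : ‖z‖ ≤ ρ := hM z (Multiset.mem_cons_self z M)
      set v' : ℕ → ℂ := fun k => v (k + 1) - z * v k with hv'def
      have hv'rec : ∀ j, L ((M.map fun w => X - C w).prod) v' j = 0 := by
        intro j; rw [← L_prod_cons]; exact hv j
      obtain ⟨C', hC', hbound⟩ := ih (fun w hw => hM w (Multiset.mem_cons_of_mem hw)) v' hv'rec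
      set m := Multiset.card M with hm
      set K : ℝ := ‖v 0‖ + C' / ρ + 1 with hK
      have hKpos : 0 < K := by positivity
      have hCK : C' ≤ K * ρ := by
        rw [hK]
        have : C' / ρ * ρ = C' := div_mul_cancel₀ _ (ne_of_gt hρ)
        nlinarith [norm_nonneg (v 0)]
      have main : ∀ j, ‖v j‖ ≤ K * ((j : ℝ) + 1) ^ (m + 1) * ρ ^ j := by
        intro j
        induction j with
        | zero =>
            simp only [Nat.cast_zero, zero_add, one_pow, pow_zero, mul_one]
            have h5 := div_nonneg hC'.le hρ.le
            rw [hK]; linarith [norm_nonneg (v 0)]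
        | succ j ihj =>
            have hvs : v (j + 1) = z * v j + v' j := by simp [hv'def]
            have h1 : ‖v (j + 1)‖ ≤ ρ * ‖v j‖ + ‖v' j‖ := by
              rw [hvs]
              calc ‖z * v j + v' j‖
                  ≤ ‖z * v j‖ + ‖v' j‖ := norm_add_le _ _
                _ ≤ ρ * ‖v j‖ + ‖v' j‖ := by
                    rw [norm_mul]
                    nlinarith [norm_nonneg (v j)]
            have h2 := hbound j
            set x : ℝ := (j : ℝ) + 1 with hx
            have hx1 : (1 : ℝ) ≤ x := by
              rw [hx]; have := Nat.cast_nonneg (α := ℝ) j; linarith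
            have hxpos : (0 : ℝ) < x := lt_of_lt_of_le one_pos hx1
            have hxx : ((j + 1 : ℕ) : ℝ) + 1 = x + 1 := by push_cast [hx]; ring
            have hpow : x ^ (m + 1) + x ^ m ≤ (x + 1) ^ (m + 1) := by
              have h3 : x ^ (m + 1) + x ^ m = x ^ m * (x + 1) := by ring
              have h4 : x ^ m ≤ (x + 1) ^ m := pow_le_pow_left₀ hxpos.le (by linarith) m
              calc x ^ (m + 1) + x ^ m = x ^ m * (x + 1) := h3
                _ ≤ (x + 1) ^ m * (x + 1) := by nlinarith
                _ = (x + 1) ^ (m + 1) := by ring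
            have hρj : (0 : ℝ) < ρ ^ j := pow_pos hρ j
            calc ‖v (j + 1)‖
                ≤ ρ * ‖v j‖ + ‖v' j‖ := h1
              _ ≤ ρ * (K * x ^ (m + 1) * ρ ^ j) + C' * x ^ m * ρ ^ j := by
                  have := norm_nonneg (v j)
                  nlinarith [ihj]
              _ ≤ ρ * (K * x ^ (m + 1) * ρ ^ j) + K * ρ * x ^ m * ρ ^ j := by
                  have hxm : (0:ℝ) < x ^ m := pow_pos hxpos m
                  have h5 : C' * (x ^ m * ρ ^ j) ≤ K * ρ * (x ^ m * ρ ^ j) :=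
                    mul_le_mul_of_nonneg_right hCK (by positivity)
                  nlinarith [h5]
              _ = K * (x ^ (m + 1) + x ^ m) * ρ ^ (j + 1) := by ring
              _ ≤ K * (x + 1) ^ (m + 1) * ρ ^ (j + 1) := by
                  have h6 := mul_le_mul_of_nonneg_left hpow hKpos.le
                  exact mul_le_mul_of_nonneg_right h6 (pow_pos hρ (j + 1)).le
              _ = K * (((j + 1 : ℕ) : ℝ) + 1) ^ (m + 1) * ρ ^ (j + 1) := by rw [hxx]
      refine ⟨K, hKpos, fun j => ?_⟩
      simpa [Multiset.card_cons] using main j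

/-- a common geometric bound strictly less than 1 for a multiset inside the open unit disk -/
lemma exists_rho (M : Multiset ℂ) (hM : ∀ z ∈ M, ‖z‖ < 1) :
    ∃ ρ₀ : ℝ, 0 < ρ₀ ∧ ρ₀ < 1 ∧ ∀ z ∈ M, ‖z‖ ≤ ρ₀ := by
  induction M using Multiset.induction_on with
  | empty => exact ⟨1/2, by norm_num, by norm_num, fun z hz => absurd hz (by simp)⟩
  | cons z M ih =>
      obtain ⟨ρ', h0, h1, hb⟩ := ih (fun w hw => hM w (Multiset.mem_cons_of_mem hw))
      refine ⟨max ρ' (‖z‖), lt_max_of_lt_left h0,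
        max_lt h1 (hM z (Multiset.mem_cons_self z M)), fun w hw => ?_⟩
      rcases Multiset.mem_cons.mp hw with h | h
      · rw [h]; exact le_max_right _ _
      · exact le_trans (hb w h) (le_max_left _ _)

/-- polynomial×geometric bound improves to a pure geometric bound -/
lemma geom_bound (m : ℕ) (ρ₀ : ℝ) (h0 : 0 < ρ₀) (h1 : ρ₀ < 1) (C : ℝ) (hC : 0 < C)
    (v : ℕ → ℂ) (hb : ∀ j, ‖v j‖ ≤ C * ((j : ℝ) + 1) ^ m * ρ₀ ^ j) :
    ∃ C' > 0, ∃ ρ : ℝ, 0 < ρ ∧ ρ < 1 ∧ ∀ j, ‖v j‖ ≤ C' * ρ ^ j := by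
  set ρ : ℝ := (1 + ρ₀) / 2 with hρdef
  have hρ0 : 0 < ρ := by rw [hρdef]; linarith
  have hρ1 : ρ < 1 := by rw [hρdef]; linarith
  have hρ₀ρ : ρ₀ < ρ := by rw [hρdef]; linarith
  set t : ℝ := ρ₀ / ρ with htdef
  have ht0 : 0 < t := div_pos h0 hρ0
  have ht1 : t < 1 := (div_lt_one hρ0).mpr hρ₀ρ
  set f : ℕ → ℝ := fun j => ((j : ℝ) + 1) ^ m * t ^ j with hfdef
  have hflim : Filter.Tendsto f Filter.atTop (nhds 0) := by
    have hg : Filter.Tendsto (fun n : ℕ => (n : ℝ) ^ m * t ^ n) Filter.atTop (nhds 0) :=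
      tendsto_pow_const_mul_const_pow_of_abs_lt_one m (by rw [abs_of_pos ht0]; exact ht1)
    have hgs : Filter.Tendsto (fun j : ℕ => ((j + 1 : ℕ) : ℝ) ^ m * t ^ (j + 1))
        Filter.atTop (nhds 0) := hg.comp (Filter.tendsto_add_atTop_nat 1)
    have : Filter.Tendsto (fun j : ℕ => t⁻¹ * (((j + 1 : ℕ) : ℝ) ^ m * t ^ (j + 1)))
        Filter.atTop (nhds 0) := by simpa using hgs.const_mul t⁻¹
    refine this.congr fun j => ?_
    rw [hfdef]
    push_cast
    field_simp
    ring
  obtain ⟨C₂, hC₂⟩ := hflim.bddAbove_range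
  have hC₂le : ∀ j, f j ≤ max C₂ 1 := fun j =>
    le_trans (hC₂ (Set.mem_range_self j)) (le_max_left _ _)
  refine ⟨C * max C₂ 1, by positivity, ρ, hρ0, hρ1, fun j => ?_⟩
  have key : ρ₀ ^ j = t ^ j * ρ ^ j := by
    rw [htdef, div_pow, div_mul_cancel₀]
    positivity
  calc ‖v j‖ ≤ C * ((j : ℝ) + 1) ^ m * ρ₀ ^ j := hb j
    _ = C * f j * ρ ^ j := by rw [key, hfdef]; ring
    _ ≤ C * max C₂ 1 * ρ ^ j := by
        exact mul_le_mul_of_nonneg_right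
          (mul_le_mul_of_nonneg_left (hC₂le j) hC.le) (pow_pos hρ0 j).le

/-- the solution of the monic recurrence associated to Q with the first r values all -1 -/
def wseq (Q : Polynomial ℂ) (r : ℕ) : ℕ → ℂ
  | j =>
    if h : j < r then -1
    else -∑ i ∈ (Finset.range r).attach, Q.coeff i.1 * wseq Q r (j - r + i.1)
  termination_by j => j
  decreasing_by
    have := Finset.mem_range.mp i.2
    omega

lemma wseq_init (Q : Polynomial ℂ) (r j : ℕ) (h : j < r) : wseq Q r j = -1 := by
  rw [wseq]; exact dif_pos h

lemma wseq_rec (Q : Polynomial ℂ) (r j : ℕ) (h : ¬ j < r) :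
    wseq Q r j = -∑ i ∈ Finset.range r, Q.coeff i * wseq Q r (j - r + i) := by
  rw [wseq, dif_neg h, ← Finset.sum_attach (Finset.range r) (fun i => Q.coeff i * wseq Q r (j - r + i))]

lemma L_wseq (Q : Polynomial ℂ) (r : ℕ) (hQ : Q.Monic) (hdeg : Q.natDegree = r) (j : ℕ) :
    L Q (wseq Q r) j = 0 := by
  rw [L_eq_range (N := r + 1) (by omega) (wseq Q r) j, Finset.sum_range_succ]
  have hc : Q.coeff r = 1 := by rw [← hdeg]; exact hQ.coeff_natDegree
  have hw : wseq Q r (j + r) = -∑ i ∈ Finset.range r, Q.coeff i * wseq Q r (j + i) := by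
    rw [wseq_rec Q r (j + r) (by omega)]
    congr 1
    exact Finset.sum_congr rfl fun i hi => by
      have := Finset.mem_range.mp hi; congr 2; omega
  rw [hc, one_mul, hw]
  simp

lemma bridge {M : Type*} [AddCommMonoid M] (r p : ℕ) (F : ℤ → ℕ → M) :
    ∑ ℓ ∈ Finset.Icc (-(r : ℤ)) (p : ℤ), F ℓ (ℓ + r).toNat
      = ∑ i ∈ Finset.range (p + r + 1), F ((i : ℤ) - r) i := by
  refine Finset.sum_bij' (fun ℓ _ => (ℓ + (r : ℤ)).toNat) (fun i _ => (i : ℤ) - r)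
    ?_ ?_ ?_ ?_ ?_
  · intro ℓ hℓ
    rw [Finset.mem_Icc] at hℓ
    show (ℓ + (r : ℤ)).toNat ∈ Finset.range (p + r + 1)
    rw [Finset.mem_range]
    omega
  · intro i hi
    rw [Finset.mem_range] at hi
    show (i : ℤ) - r ∈ Finset.Icc (-(r : ℤ)) (p : ℤ)
    rw [Finset.mem_Icc]
    omega
  · intro ℓ hℓ
    rw [Finset.mem_Icc] at hℓ
    show (((ℓ + (r : ℤ)).toNat : ℤ)) - r = ℓ
    omega
  · intro i hi
    rw [Finset.mem_range] at hi
    show (((i : ℤ) - r) + r).toNat = i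
    omega
  · intro ℓ hℓ
    rw [Finset.mem_Icc] at hℓ
    have h1 : (((ℓ + (r : ℤ)).toNat : ℤ)) - r = ℓ := by omega
    rw [h1]

end Stmt9
end

open Stmt9

/-- if the characteristic polynomial has exactly r roots (with multiplicity)
in the punctured open unit disk, then for every u there is a unique boundary layer
profile associated with u; it is u·w where w is the profile for u = 1, and it decays
exponentially fast. -/
theorem stmt9 (r p : ℕ) (hr : 1 ≤ r) (a : ℤ → ℝ)
    (har : a (-(r : ℤ)) ≠ 0) (hap : a p ≠ 0)
    (hcount : Multiset.card
      ((∑ ℓ ∈ Finset.Icc (-(r : ℤ)) (p : ℤ),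
          Polynomial.C (a ℓ : ℂ) * Polynomial.X ^ (ℓ + r).toNat).roots.filter
        (fun z => ‖z‖ < 1 ∧ z ≠ 0)) = r) :
    ∃ w : ℕ → ℝ,
      -- w is the boundary layer profile associated with u = 1
      (∀ j : ℕ, j < r → w j = -1) ∧
      (∀ j : ℕ, ∑ ℓ ∈ Finset.Icc (-(r : ℤ)) (p : ℤ), a ℓ * w (j + (ℓ + r).toNat) = 0) ∧
      Filter.Tendsto w Filter.atTop (nhds 0) ∧
      -- w decays exponentially fast
      (∃ C > 0, ∃ ρ : ℝ, 0 < ρ ∧ ρ < 1 ∧ ∀ j : ℕ, |w j| ≤ C * ρ ^ j) ∧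
      -- for every u, u·w is the unique boundary layer profile associated with u
      (∀ u : ℝ,
        ((∀ j : ℕ, j < r → u * w j = -u) ∧
         (∀ j : ℕ, ∑ ℓ ∈ Finset.Icc (-(r : ℤ)) (p : ℤ),
            a ℓ * (u * w (j + (ℓ + r).toNat)) = 0) ∧
         Filter.Tendsto (fun j => u * w j) Filter.atTop (nhds 0)) ∧
        (∀ v : ℕ → ℝ,
          (∀ j : ℕ, j < r → v j = -u) →
          (∀ j : ℕ, ∑ ℓ ∈ Finset.Icc (-(r : ℤ)) (p : ℤ),
            a ℓ * v (j + (ℓ + r).toNat) = 0) →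
          Filter.Tendsto v Filter.atTop (nhds 0) →
          ∀ j : ℕ, v j = u * w j)) := by
  classical
  set n := p + r with hn
  set b : ℕ → ℂ := fun i => ((a ((i : ℤ) - r) : ℝ) : ℂ) with hb
  set Pc : Polynomial ℂ := ∑ ℓ ∈ Finset.Icc (-(r : ℤ)) (p : ℤ),
      Polynomial.C (a ℓ : ℂ) * Polynomial.X ^ (ℓ + r).toNat with hPcdef
  have hPc2 : Pc = ∑ i ∈ Finset.range (n + 1), Polynomial.C (b i) * Polynomial.X ^ i := by
    rw [hPcdef, hn]
    exact bridge r p (fun ℓ k => Polynomial.C ((a ℓ : ℝ) : ℂ) * Polynomial.X ^ k)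
  have hcoeff : ∀ k, Pc.coeff k = if k ∈ Finset.range (n + 1) then b k else 0 := by
    intro k
    rw [hPc2, Polynomial.finset_sum_coeff]
    simp [Polynomial.coeff_C_mul, Polynomial.coeff_X_pow, mul_ite, Finset.sum_ite_eq]
  have hbn : b n ≠ 0 := by
    have h1 : ((n : ℤ)) - r = p := by rw [hn]; push_cast; ring
    rw [hb]
    simp only [h1]
    exact_mod_cast Complex.ofReal_ne_zero.mpr hap
  have hb0 : b 0 ≠ 0 := by
    have h1 : ((0 : ℕ) : ℤ) - r = -(r : ℤ) := by push_cast; ring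
    rw [hb]
    simp only [h1]
    exact_mod_cast Complex.ofReal_ne_zero.mpr har
  have hdegle : Pc.natDegree ≤ n := by
    rw [Polynomial.natDegree_le_iff_coeff_eq_zero]
    intro N hN
    rw [hcoeff]
    simp [Finset.mem_range]
    omega
  have hPne : Pc ≠ 0 := by
    intro h
    apply hbn
    have := hcoeff n
    rw [h] at this
    simpa [Finset.mem_range] using this.symm
  have hdeg : Pc.natDegree = n := by
    refine le_antisymm hdegle (Polynomial.le_natDegree_of_ne_zero ?_)
    rw [hcoeff]
    simpa [Finset.mem_range] using hbn
  have hlc : Pc.leadingCoeff = b n := by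
    rw [Polynomial.leadingCoeff, hdeg, hcoeff]
    simp [Finset.mem_range]
  set Min := Pc.roots.filter (fun z => ‖z‖ < 1 ∧ z ≠ 0) with hMindef
  set Mout := Pc.roots.filter (fun z => ¬(‖z‖ < 1 ∧ z ≠ 0)) with hMoutdef
  set Qp := (Min.map fun z => Polynomial.X - Polynomial.C z).prod with hQpdef
  set Rp := (Mout.map fun z => Polynomial.X - Polynomial.C z).prod with hRpdef
  have hfact : Pc = Polynomial.C (b n) * (Qp * Rp) := by
    have hsplits : Polynomial.Splits Pc := IsAlgClosed.splits Pc
    have heq := hsplits.eq_prod_roots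
    rw [hlc] at heq
    have hroots : Pc.roots = Min + Mout :=
      (Multiset.filter_add_not (fun z => ‖z‖ < 1 ∧ z ≠ 0) Pc.roots).symm
    rw [hroots, Multiset.map_add, Multiset.prod_add] at heq
    exact heq
  have hQmonic : Qp.Monic :=
    Polynomial.monic_multiset_prod_of_monic _ _ fun z _ => Polynomial.monic_X_sub_C z
  have hQdeg : Qp.natDegree = r := by
    rw [hQpdef, Polynomial.natDegree_multiset_prod_X_sub_C_eq_card, ← hcount]
  have hMin1 : ∀ z ∈ Min, ‖z‖ < 1 := by
    intro z hz
    rw [hMindef] at hz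
    exact (Multiset.mem_filter.mp hz).2.1
  have hMout1 : ∀ z ∈ Mout, 1 ≤ ‖z‖ := by
    intro z hz
    rw [hMoutdef] at hz
    obtain ⟨hzr, hzp⟩ := Multiset.mem_filter.mp hz
    have hz0 : z ≠ 0 := by
      intro h
      apply hb0
      have : Polynomial.eval 0 Pc = 0 := by
        have h3 := (Polynomial.mem_roots hPne).mp hzr
        rw [h] at h3
        exact h3

      have h2 : Pc.coeff 0 = 0 := by
        rw [Polynomial.coeff_zero_eq_eval_zero]
        exact this
      rw [hcoeff 0] at h2
      simpa [Finset.mem_range] using h2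
    push_neg at hzp
    exact le_of_not_gt fun h => hz0 (hzp h)
  have hLPc : ∀ (v : ℕ → ℂ) (j : ℕ),
      Stmt9.L Pc v j = b n * Stmt9.L Rp (fun k => Stmt9.L Qp v k) j := by
    intro v j
    rw [hfact, Stmt9.L_C_mul, mul_comm Qp Rp, Stmt9.L_mul]
  have hbridge : ∀ (v : ℕ → ℂ) (j : ℕ),
      (∑ ℓ ∈ Finset.Icc (-(r : ℤ)) (p : ℤ), (a ℓ : ℂ) * v (j + (ℓ + r).toNat))
        = Stmt9.L Pc v j := by
    intro v j
    rw [Stmt9.L_eq_range (N := n + 1) (by omega) v j]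
    rw [show (∑ ℓ ∈ Finset.Icc (-(r : ℤ)) (p : ℤ), (a ℓ : ℂ) * v (j + (ℓ + r).toNat))
      = ∑ i ∈ Finset.range (p + r + 1), ((a ((i : ℤ) - r) : ℝ) : ℂ) * v (j + i) from
      bridge r p (fun ℓ k => (a ℓ : ℂ) * v (j + k))]
    refine Finset.sum_congr (by rw [hn]) fun i hi => ?_
    rw [hcoeff i, if_pos hi]
  -- existence
  set wc := Stmt9.wseq Qp r with hwcdef
  have hQw : ∀ j, Stmt9.L Qp wc j = 0 := Stmt9.L_wseq Qp r hQmonic hQdeg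
  have hPw : ∀ j, Stmt9.L Pc wc j = 0 := by
    intro j
    rw [hLPc wc j]
    have h1 : (fun k => Stmt9.L Qp wc k) = fun _ => (0 : ℂ) := funext hQw
    rw [h1]
    simp [Stmt9.L, Polynomial.sum]
  obtain ⟨ρ₀, hρ₀0, hρ₀1, hρ₀b⟩ := Stmt9.exists_rho Min hMin1
  obtain ⟨C0, hC0, hpb⟩ := Stmt9.decay Min ρ₀ hρ₀0 hρ₀b wc hQw
  rw [hcount] at hpb
  obtain ⟨C1, hC1, ρ, hρ0, hρ1, hgb⟩ := Stmt9.geom_bound r ρ₀ hρ₀0 hρ₀1 C0 hC0 wc hpb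
  set w : ℕ → ℝ := fun j => (wc j).re with hwdef
  have hwinit : ∀ j, j < r → w j = -1 := by
    intro j hj
    have h1 : wc j = -1 := by rw [hwcdef]; exact Stmt9.wseq_init Qp r j hj
    rw [hwdef]
    simp [h1]
  have hcrec : ∀ j, (∑ ℓ ∈ Finset.Icc (-(r : ℤ)) (p : ℤ),
      (a ℓ : ℂ) * wc (j + (ℓ + r).toNat)) = 0 :=
    fun j => (hbridge wc j).trans (hPw j)
  have hwrec : ∀ j, ∑ ℓ ∈ Finset.Icc (-(r : ℤ)) (p : ℤ), a ℓ * w (j + (ℓ + r).toNat) = 0 := by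
    intro j
    have h1 : ∑ ℓ ∈ Finset.Icc (-(r : ℤ)) (p : ℤ), a ℓ * w (j + (ℓ + r).toNat)
        = (∑ ℓ ∈ Finset.Icc (-(r : ℤ)) (p : ℤ), (a ℓ : ℂ) * wc (j + (ℓ + r).toNat)).re := by
      rw [Complex.re_sum]
      exact Finset.sum_congr rfl fun ℓ _ => (Complex.re_ofReal_mul _ _).symm
    rw [h1, hcrec j, Complex.zero_re]
  have hwexp : ∀ j, |w j| ≤ C1 * ρ ^ j := fun j =>
    le_trans (Complex.abs_re_le_norm (wc j)) (hgb j)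
  have hgeom0 : Filter.Tendsto (fun j : ℕ => C1 * ρ ^ j) Filter.atTop (nhds 0) := by
    simpa using (tendsto_pow_atTop_nhds_zero_of_lt_one hρ0.le hρ1).const_mul C1
  have hwtend : Filter.Tendsto w Filter.atTop (nhds 0) :=
    squeeze_zero_norm (fun j => by rw [Real.norm_eq_abs]; exact hwexp j) hgeom0
  refine ⟨w, hwinit, hwrec, hwtend, ⟨C1, hC1, ρ, hρ0, hρ1, hwexp⟩, ?_⟩
  intro u
  constructor
  · refine ⟨fun j hj => by rw [hwinit j hj]; ring, fun j => ?_, ?_⟩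
    · have h1 : ∑ ℓ ∈ Finset.Icc (-(r : ℤ)) (p : ℤ), a ℓ * (u * w (j + (ℓ + r).toNat))
          = u * ∑ ℓ ∈ Finset.Icc (-(r : ℤ)) (p : ℤ), a ℓ * w (j + (ℓ + r).toNat) := by
        rw [Finset.mul_sum]
        exact Finset.sum_congr rfl fun ℓ _ => by ring
      rw [h1, hwrec j, mul_zero]
    · simpa using hwtend.const_mul u
  · intro v hv1 hv2 hv3
    set d : ℕ → ℂ := fun j => ((v j - u * w j : ℝ) : ℂ) with hddef
    have hd0 : ∀ j, j < r → d j = 0 := by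
      intro j hj
      have h1 : v j - u * w j = 0 := by rw [hv1 j hj, hwinit j hj]; ring
      rw [hddef]
      simp [h1]
    have hdtend : Filter.Tendsto d Filter.atTop (nhds 0) := by
      have h1 : Filter.Tendsto (fun j => v j - u * w j) Filter.atTop (nhds 0) := by
        simpa using hv3.sub (hwtend.const_mul u)
      have h2 := (Complex.continuous_ofReal.tendsto 0).comp h1
      simpa [hddef, Function.comp_def, Complex.ofReal_sub, Complex.ofReal_mul] using h2
    have hLd : ∀ j, Stmt9.L Pc d j = 0 := by
      intro j
      rw [← hbridge d j]
      have h1 : (∑ ℓ ∈ Finset.Icc (-(r : ℤ)) (p : ℤ), (a ℓ : ℂ) * d (j + (ℓ + r).toNat))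
          = ((∑ ℓ ∈ Finset.Icc (-(r : ℤ)) (p : ℤ), a ℓ * v (j + (ℓ + r).toNat) : ℝ) : ℂ)
            - (u : ℂ) * ((∑ ℓ ∈ Finset.Icc (-(r : ℤ)) (p : ℤ),
                a ℓ * w (j + (ℓ + r).toNat) : ℝ) : ℂ) := by
        push_cast
        rw [Finset.mul_sum, ← Finset.sum_sub_distrib]
        exact Finset.sum_congr rfl fun ℓ _ => by rw [hddef]; push_cast; ring
      rw [h1, hv2 j, hwrec j]
      simp
    have hyR : ∀ j, Stmt9.L Rp (fun k => Stmt9.L Qp d k) j = 0 := by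
      intro j
      have h1 := hLd j
      rw [hLPc d j] at h1
      exact (mul_eq_zero.mp h1).resolve_left hbn
    have hytend : Filter.Tendsto (fun j => Stmt9.L Qp d j) Filter.atTop (nhds 0) := by
      have hform : (fun j => Stmt9.L Qp d j)
          = fun j => ∑ i ∈ Finset.range (r + 1), Qp.coeff i * d (j + i) :=
        funext fun j => Stmt9.L_eq_range (by omega) d j
      rw [hform]
      have h0 : ∀ i ∈ Finset.range (r + 1),
          Filter.Tendsto (fun j => Qp.coeff i * d (j + i)) Filter.atTop (nhds 0) := by
        intro i _
        have h1 : Filter.Tendsto (fun j => d (j + i)) Filter.atTop (nhds 0) :=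
          hdtend.comp (Filter.tendsto_add_atTop_nat i)
        simpa using h1.const_mul (Qp.coeff i)
      simpa using tendsto_finset_sum (Finset.range (r + 1)) h0
    have hy0 : ∀ j, Stmt9.L Qp d j = 0 :=
      Stmt9.vanish Mout hMout1 _ hyR hytend
    have hdz : ∀ j, d j = 0 := by
      intro j
      induction j using Nat.strong_induction_on with
      | _ j ih =>
        by_cases h : j < r
        · exact hd0 j h
        · have h1 := hy0 (j - r)
          rw [Stmt9.L_eq_range (N := r + 1) (by omega) d (j - r),
            Finset.sum_range_succ] at h1
          have hcr : Qp.coeff r = 1 := by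
            have h2 := hQmonic.coeff_natDegree
            rwa [hQdeg] at h2
          have hz2 : ∀ i ∈ Finset.range r, Qp.coeff i * d (j - r + i) = 0 := by
            intro i hi
            have hi2 := Finset.mem_range.mp hi
            rw [ih (j - r + i) (by omega), mul_zero]
          rw [Finset.sum_eq_zero hz2, hcr, one_mul, zero_add] at h1
          rw [show j - r + r = j by omega] at h1
          exact h1
    intro j
    have h1 := hdz j
    simp only [hddef] at h1
    have h2 : (v j - u * w j : ℝ) = 0 := by exact_mod_cast h1
    linarith
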